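/- Suppose f is worst-case monotone and worst-case submodular and f(∅) = 0, let B be a positive integer budget, and let π^{g+} be the relaxed budgeted worst-case density-greedy policy. Then for every adaptive policy π* with c_wc(π*) ≤ B, f_wc(π^{g+}) ≥ (1 − 1/e) · f_wc(π*). -/
import Mathlib


namespace WCAS

variable {ι O : Type*}

/-- The domain of a partial realization `ψ : ι → Option O`. -/
def dom (ψ : ι → Option O) : Set ι := {e | ψ e ≠ none}

/-- A (full) realization `φ` is consistent with a partial realization `ψ`. -/
def consistent (φ : ι → O) (ψ : ι → Option O) : Prop :=
  ∀ e o, ψ e = some o → φ e = o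

/-- `ψ` is a subrealization of `ψ'` (written `ψ ⊆ ψ'`). -/
def subreal (ψ ψ' : ι → Option O) : Prop :=
  ∀ e o, ψ e = some o → ψ' e = some o

/-- Extend a partial realization `ψ` by observing state `o` for item `e`. -/
def extendPR [DecidableEq ι] (ψ : ι → Option O) (e : ι) (o : O) : ι → Option O :=
  fun x => if x = e then some o else ψ x

/-- The empty partial realization. -/
def emptyPR : ι → Option O := fun _ => none

/-- View a full realization as a partial realization with full domain. -/
def toPR (φ : ι → O) : ι → Option O := fun e => some (φ e)

/-- `O(e, ψ)`: the set of possible states of item `e` given observation `ψ`,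
with respect to the set `U` of possible realizations. -/
def Ostates (U : Set (ι → O)) (e : ι) (ψ : ι → Option O) : Set O :=
  {o | ∃ φ ∈ U, consistent φ ψ ∧ φ e = o}

/-- The worst-case marginal utility `Δwc(e | ψ)` of item `e` on top of `ψ`. -/
noncomputable def Dwc [DecidableEq ι] (f : (ι → Option O) → ℝ) (U : Set (ι → O))
    (e : ι) (ψ : ι → Option O) : ℝ :=
  sInf ((fun o => f (extendPR ψ e o) - f ψ) '' Ostates U e ψ)

/-- `f` is worst-case monotone. -/
def WCMonotone [DecidableEq ι] (f : (ι → Option O) → ℝ) (U : Set (ι → O)) : Prop :=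
  ∀ ψ : ι → Option O, (∃ φ ∈ U, consistent φ ψ) →
    ∀ e, e ∉ dom ψ → 0 ≤ Dwc f U e ψ

/-- `f` is worst-case submodular. -/
def WCSubmodular [DecidableEq ι] (f : (ι → Option O) → ℝ) (U : Set (ι → O)) : Prop :=
  ∀ ψ ψ' : ι → Option O, subreal ψ ψ' → (∃ φ ∈ U, consistent φ ψ') →
    ∀ e, e ∉ dom ψ' → Dwc f U e ψ' ≤ Dwc f U e ψ

/-- An adaptive policy maps each observation either to an item outside its
domain or to `none` (stop). -/
def ValidPolicy (π : (ι → Option O) → Option ι) : Prop :=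
  ∀ ψ e, π ψ = some e → ψ e = none

/-- One step of executing policy `π` under realization `φ`. -/
def stepPolicy [DecidableEq ι] (π : (ι → Option O) → Option ι) (φ : ι → O)
    (ψ : ι → Option O) : ι → Option O :=
  match π ψ with
  | none => ψ
  | some e => extendPR ψ e (φ e)

/-- Executing policy `π` under realization `φ` for `n` steps, starting from the
empty observation. -/
def runPolicy [DecidableEq ι] (π : (ι → Option O) → Option ι) (φ : ι → O) :
    ℕ → ι → Option O
  | 0 => emptyPR
  | n + 1 => stepPolicy π φ (runPolicy π φ n)

/-- The final partial realization `ψ(π, φ)` produced by executing `π` under `φ`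
(a valid policy over a finite ground set terminates within `card ι` steps). -/
def finalPR [DecidableEq ι] [Fintype ι] (π : (ι → Option O) → Option ι) (φ : ι → O) :
    ι → Option O :=
  runPolicy π φ (Fintype.card ι)

open scoped Classical in
/-- The total cost `c(dom ψ)` of the items in the domain of `ψ`. -/
noncomputable def costPR [Fintype ι] (c : ι → ℝ) (ψ : ι → Option O) : ℝ :=
  ∑ e : ι, if (ψ e).isSome then c e else 0

/-- The worst-case cost `c_wc(π) = max_{φ ∈ U} c(dom ψ(π, φ))`. -/
noncomputable def cwc [DecidableEq ι] [Fintype ι] (c : ι → ℝ) (U : Set (ι → O))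
    (π : (ι → Option O) → Option ι) : ℝ :=
  sSup ((fun φ => costPR c (finalPR π φ)) '' U)

/-- The worst-case utility `f_wc(π) = min_{φ ∈ U} f(ψ(π, φ))`. -/
noncomputable def fwc [DecidableEq ι] [Fintype ι] (f : (ι → Option O) → ℝ)
    (U : Set (ι → O)) (π : (ι → Option O) → Option ι) : ℝ :=
  sInf ((fun φ => f (finalPR π φ)) '' U)

/-- `ψ` is reachable by executing `π` under some realization in `U`. -/
def Reachable [DecidableEq ι] (π : (ι → Option O) → Option ι) (U : Set (ι → O))
    (ψ : ι → Option O) : Prop :=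
  ∃ φ ∈ U, ∃ n, runPolicy π φ n = ψ

/-- Policy `π` covers the goal value `Q`: under every realization in `U`,
its final observation has utility at least `Q`. -/
def Covers [DecidableEq ι] [Fintype ι] (f : (ι → Option O) → ℝ) (U : Set (ι → O))
    (π : (ι → Option O) → Option ι) (Q : ℝ) : Prop :=
  ∀ φ ∈ U, Q ≤ f (finalPR π φ)

/-- The worst-case density-greedy policy for the cover problem with goal `Q`:
it stops at observations with `f ψ ≥ Q`, and at any reachable observation with
`f ψ < Q` it selects an item maximizing `Δwc(e | ψ) / c(e)`. -/
def CoverGreedy [DecidableEq ι] [Fintype ι] (f : (ι → Option O) → ℝ)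
    (U : Set (ι → O)) (c : ι → ℝ) (Q : ℝ) (π : (ι → Option O) → Option ι) : Prop :=
  ValidPolicy π ∧
  (∀ ψ : ι → Option O, Q ≤ f ψ → π ψ = none) ∧
  (∀ ψ : ι → Option O, Reachable π U ψ → f ψ < Q →
    ∃ e, e ∉ dom ψ ∧ π ψ = some e ∧
      ∀ e', e' ∉ dom ψ → Dwc f U e' ψ / c e' ≤ Dwc f U e ψ / c e)

/-- The budgeted worst-case density-greedy policy: at any reachable observation
it picks a density-maximizing item and selects it if the budget permits,
stopping otherwise. -/
def BudgetGreedy [DecidableEq ι] [Fintype ι] (f : (ι → Option O) → ℝ)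
    (U : Set (ι → O)) (c : ι → ℝ) (B : ℝ) (π : (ι → Option O) → Option ι) : Prop :=
  ValidPolicy π ∧
  ∀ ψ : ι → Option O, Reachable π U ψ → dom ψ ≠ Set.univ →
    ∃ e, e ∉ dom ψ ∧
      (∀ e', e' ∉ dom ψ → Dwc f U e' ψ / c e' ≤ Dwc f U e ψ / c e) ∧
      ((costPR c ψ + c e ≤ B ∧ π ψ = some e) ∨ (B < costPR c ψ + c e ∧ π ψ = none))

/-- The relaxed budgeted worst-case density-greedy policy: it keeps selecting
density-maximizing items while the cost spent so far is within the budget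
(thus also selecting the first item that makes the total cost exceed the
budget), and stops once the budget has been exceeded. -/
def RelaxedBudgetGreedy [DecidableEq ι] [Fintype ι] (f : (ι → Option O) → ℝ)
    (U : Set (ι → O)) (c : ι → ℝ) (B : ℝ) (π : (ι → Option O) → Option ι) : Prop :=
  ValidPolicy π ∧
  (∀ ψ : ι → Option O, Reachable π U ψ → B < costPR c ψ → π ψ = none) ∧
  (∀ ψ : ι → Option O, Reachable π U ψ → costPR c ψ ≤ B → dom ψ ≠ Set.univ →
    ∃ e, e ∉ dom ψ ∧ π ψ = some e ∧
      ∀ e', e' ∉ dom ψ → Dwc f U e' ψ / c e' ≤ Dwc f U e ψ / c e)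


/-! ### Auxiliary lemmas -/

section Aux

variable [DecidableEq ι]

lemma not_dom_iff {ψ : ι → Option O} {e : ι} : e ∉ dom ψ ↔ ψ e = none := by
  simp [dom]

lemma subreal_refl (ψ : ι → Option O) : subreal ψ ψ := fun _ _ h => h

lemma subreal_trans {ψ₁ ψ₂ ψ₃ : ι → Option O} (h₁ : subreal ψ₁ ψ₂) (h₂ : subreal ψ₂ ψ₃) :
    subreal ψ₁ ψ₃ := fun e o h => h₂ e o (h₁ e o h)

lemma subreal_extend {ψ : ι → Option O} {e : ι} (h : ψ e = none) (o : O) :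
    subreal ψ (extendPR ψ e o) := by
  intro x o' hx
  by_cases hxe : x = e
  · rw [hxe] at hx; rw [h] at hx; exact absurd hx (by simp)
  · simp [extendPR, hxe, hx]

lemma extend_self {ψ : ι → Option O} {e : ι} {o : O} (h : ψ e = some o) :
    extendPR ψ e o = ψ := by
  funext x
  by_cases hxe : x = e <;> simp [extendPR, hxe]
  exact h.symm

lemma consistent_of_subreal {φ : ι → O} {ψ ψ' : ι → Option O} (hsub : subreal ψ ψ')
    (h : consistent φ ψ') : consistent φ ψ := fun e o he => h e o (hsub e o he)

lemma consistent_extend {φ : ι → O} {ψ : ι → Option O} {e : ι} {o : O}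
    (h : consistent φ ψ) (he : φ e = o) : consistent φ (extendPR ψ e o) := by
  intro x o' hx
  by_cases hxe : x = e
  · subst hxe
    simp [extendPR] at hx
    rw [he, hx]
  · simp [extendPR, hxe] at hx
    exact h x o' hx

lemma consistent_empty (φ : ι → O) : consistent φ (emptyPR) := by
  intro e o h; simp [emptyPR] at h

lemma consistent_run {π : (ι → Option O) → Option ι} (φ : ι → O) (n : ℕ) :
    consistent φ (runPolicy π φ n) := by
  induction n with
  | zero => exact consistent_empty φ
  | succ n ih =>
    show consistent φ (stepPolicy π φ (runPolicy π φ n))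
    unfold stepPolicy
    cases h : π (runPolicy π φ n) with
    | none => exact ih
    | some e => exact consistent_extend ih rfl

lemma run_stable {π : (ι → Option O) → Option ι} {φ : ι → O} {n : ℕ}
    (h : π (runPolicy π φ n) = none) (k : ℕ) :
    runPolicy π φ (n + k) = runPolicy π φ n := by
  induction k with
  | zero => rfl
  | succ k ih =>
    show stepPolicy π φ (runPolicy π φ (n + k)) = _
    rw [ih]
    unfold stepPolicy
    rw [h]

open scoped Classical in
lemma run_grow [Fintype ι] {π : (ι → Option O) → Option ι} (hπ : ValidPolicy π) (φ : ι → O) :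
    ∀ n : ℕ, (∀ m, m < n → π (runPolicy π φ m) ≠ none) →
      n ≤ (Finset.univ.filter fun e => (runPolicy π φ n e).isSome).card := by
  intro n
  induction n with
  | zero => intro _; exact Nat.zero_le _
  | succ n ih =>
    intro h
    have hn := ih (fun m hm => h m (hm.trans (Nat.lt_succ_self n)))
    cases hstep : π (runPolicy π φ n) with
    | none => exact absurd hstep (h n (Nat.lt_succ_self n))
    | some e =>
      have he : runPolicy π φ n e = none := hπ _ _ hstep
      have hrun : runPolicy π φ (n + 1) = extendPR (runPolicy π φ n) e (φ e) := by
        show stepPolicy π φ (runPolicy π φ n) = _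
        unfold stepPolicy; rw [hstep]
      have hset : (Finset.univ.filter fun x => (runPolicy π φ (n+1) x).isSome) =
          insert e (Finset.univ.filter fun x => (runPolicy π φ n x).isSome) := by
        ext x
        simp only [Finset.mem_filter, Finset.mem_insert, Finset.mem_univ, true_and, hrun]
        by_cases hxe : x = e <;> simp [extendPR, hxe]
      rw [hset, Finset.card_insert_of_notMem (by simp [he])]
      omega

lemma run_stop [Fintype ι] {π : (ι → Option O) → Option ι} (hπ : ValidPolicy π) (φ : ι → O) :
    π (runPolicy π φ (Fintype.card ι)) = none := by
  classical
  by_cases hall : ∀ m, m < Fintype.card ι → π (runPolicy π φ m) ≠ none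
  · have h := run_grow hπ φ (Fintype.card ι) hall
    have hfull : (Finset.univ.filter fun e => (runPolicy π φ (Fintype.card ι) e).isSome) =
        Finset.univ := by
      apply Finset.eq_univ_of_card
      exact le_antisymm (Finset.card_le_univ _) (by simpa using h)
    cases hstep : π (runPolicy π φ (Fintype.card ι)) with
    | none => rfl
    | some e =>
      have he : runPolicy π φ (Fintype.card ι) e = none := hπ _ _ hstep
      have : e ∈ (Finset.univ.filter fun x => (runPolicy π φ (Fintype.card ι) x).isSome) := by
        rw [hfull]; exact Finset.mem_univ e
      simp [he] at this
  · push_neg at hall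
    obtain ⟨m, hm, hnone⟩ := hall
    have : runPolicy π φ (Fintype.card ι) = runPolicy π φ m := by
      rw [← Nat.add_sub_cancel' hm.le]
      exact run_stable hnone _
    rw [this]; exact hnone

lemma costPR_empty [Fintype ι] (c : ι → ℝ) : costPR c (emptyPR : ι → Option O) = 0 := by
  simp [costPR, emptyPR]

lemma costPR_extend [Fintype ι] (c : ι → ℝ) {ψ : ι → Option O} {e : ι} (h : ψ e = none) (o : O) :
    costPR c (extendPR ψ e o) = costPR c ψ + c e := by
  classical
  unfold costPR
  have key : ∀ x : ι, (if (extendPR ψ e o x).isSome then c x else 0) =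
      (if (ψ x).isSome then c x else 0) + (if x = e then c x else 0) := by
    intro x
    by_cases hxe : x = e
    · subst hxe; simp [extendPR, h]
    · simp [extendPR, hxe]
  rw [Finset.sum_congr rfl (fun x _ => key x), Finset.sum_add_distrib,
    Finset.sum_ite_eq' Finset.univ e c]
  simp

lemma costPR_nonneg [Fintype ι] {c : ι → ℝ} (hc : ∀ e, 0 ≤ c e) (ψ : ι → Option O) :
    0 ≤ costPR c ψ := by
  classical
  unfold costPR
  apply Finset.sum_nonneg
  intro e _
  split <;> simp [hc e]

lemma costPR_le_sum [Fintype ι] {c : ι → ℝ} (hc : ∀ e, 0 ≤ c e) (ψ : ι → Option O) :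
    costPR c ψ ≤ ∑ e : ι, c e := by
  classical
  unfold costPR
  apply Finset.sum_le_sum
  intro e _
  split <;> simp [hc e]

lemma dwc_bddBelow (f : (ι → Option O) → ℝ) (U : Set (ι → O)) [Finite O]
    (e : ι) (ψ : ι → Option O) :
    BddBelow ((fun o => f (extendPR ψ e o) - f ψ) '' Ostates U e ψ) :=
  ((Set.toFinite _).image _).bddBelow

lemma dwc_le_marg (f : (ι → Option O) → ℝ) {U : Set (ι → O)} [Finite O]
    {φ : ι → O} (hφU : φ ∈ U) {ψ : ι → Option O} (hcons : consistent φ ψ) (e : ι) :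
    Dwc f U e ψ ≤ f (extendPR ψ e (φ e)) - f ψ :=
  csInf_le (dwc_bddBelow f U e ψ) ⟨φ e, ⟨φ, hφU, hcons, rfl⟩, rfl⟩

open scoped Classical in
/-- Pointwise monotonicity along consistent extensions. -/
lemma mono_pointwise [Fintype ι] [Finite O] {f : (ι → Option O) → ℝ} {U : Set (ι → O)}
    (hmono : WCMonotone f U) :
    ∀ (k : ℕ) (χ μ : ι → Option O), subreal χ μ → (∃ φ ∈ U, consistent φ μ) →
      (Finset.univ.filter fun x : ι => χ x = none ∧ (μ x).isSome).card = k → f χ ≤ f μ := by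
  intro k
  induction k with
  | zero =>
    intro χ μ hsub hcons hcard
    have hempty := Finset.card_eq_zero.mp hcard
    have hall : ∀ x : ι, ¬(χ x = none ∧ (μ x).isSome) := by
      intro x hx
      have : x ∈ (Finset.univ.filter fun x : ι => χ x = none ∧ (μ x).isSome) := by
        simp [hx.1, hx.2]
      rw [hempty] at this
      exact absurd this (Finset.notMem_empty x)
    have : χ = μ := by
      funext x
      cases hx : χ x with
      | none =>
        cases hμx : μ x with
        | none => rfl
        | some o => exact absurd ⟨hx, by simp [hμx]⟩ (hall x)
      | some o => exact (hsub x o hx).symm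
    rw [this]
  | succ k ih =>
    intro χ μ hsub hcons hcard
    have hne : (Finset.univ.filter fun x : ι => χ x = none ∧ (μ x).isSome).Nonempty :=
      Finset.card_pos.mp (by omega)
    obtain ⟨e, he⟩ := hne
    have he' : χ e = none ∧ (μ e).isSome := by simpa using he
    obtain ⟨o, ho⟩ := Option.isSome_iff_exists.mp he'.2
    obtain ⟨φ, hφU, hφμ⟩ := hcons
    have hφχ : consistent φ χ := consistent_of_subreal hsub hφμ
    have hφe : φ e = o := hφμ e o ho
    have hsub' : subreal (extendPR χ e o) μ := by
      intro x o' hx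
      by_cases hxe : x = e
      · subst hxe
        simp [extendPR] at hx
        rw [← hx]; exact ho
      · simp [extendPR, hxe] at hx
        exact hsub x o' hx
    have hcard' : (Finset.univ.filter fun x : ι =>
        extendPR χ e o x = none ∧ (μ x).isSome).card = k := by
      have hset : (Finset.univ.filter fun x : ι => extendPR χ e o x = none ∧ (μ x).isSome) =
          (Finset.univ.filter fun x : ι => χ x = none ∧ (μ x).isSome).erase e := by
        ext x
        simp only [Finset.mem_filter, Finset.mem_erase, Finset.mem_univ, true_and]
        by_cases hxe : x = e
        · subst hxe; simp [extendPR]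
        · simp [extendPR, hxe]
      rw [hset, Finset.card_erase_of_mem he, hcard]
      omega
    have hstep : f χ ≤ f (extendPR χ e o) := by
      have hD0 : 0 ≤ Dwc f U e χ :=
        hmono χ ⟨φ, hφU, hφχ⟩ e (not_dom_iff.mpr he'.1)
      have hDle : Dwc f U e χ ≤ f (extendPR χ e o) - f χ := by
        have := dwc_le_marg f hφU hφχ e
        rwa [hφe] at this
      linarith
    exact hstep.trans (ih (extendPR χ e o) μ hsub' ⟨φ, hφU, hφμ⟩ hcard')

open scoped Classical in
/-- `pickMin` chooses a state in `O(e, μ)` minimizing the marginal value. -/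
noncomputable def pickMin [Finite O] [Nonempty O] (f : (ι → Option O) → ℝ)
    (U : Set (ι → O)) (e : ι) (μ : ι → Option O) : O :=
  if h : (Ostates U e μ).Nonempty then
    Classical.choose (Set.exists_min_image (Ostates U e μ)
      (fun o => f (extendPR μ e o)) (Set.toFinite _) h)
  else Classical.arbitrary O

lemma pickMin_spec [Finite O] [Nonempty O] {f : (ι → Option O) → ℝ}
    {U : Set (ι → O)} {e : ι} {μ : ι → Option O} (h : (Ostates U e μ).Nonempty) :
    pickMin f U e μ ∈ Ostates U e μ ∧
      ∀ o' ∈ Ostates U e μ, f (extendPR μ e (pickMin f U e μ)) ≤ f (extendPR μ e o') := by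
  have := Classical.choose_spec (Set.exists_min_image (Ostates U e μ)
      (fun o => f (extendPR μ e o)) (Set.toFinite _) h)
  rw [pickMin, dif_pos h]
  exact this

/-- One step of the adversarial simulation of `πs` on top of the observation `ψ`. -/
noncomputable def advStep [Finite O] [Nonempty O] (f : (ι → Option O) → ℝ)
    (U : Set (ι → O)) (πs : (ι → Option O) → Option ι)
    (p : (ι → Option O) × (ι → Option O)) : (ι → Option O) × (ι → Option O) :=
  match πs p.1 with
  | none => p
  | some e =>
    match p.2 e with
    | some o₀ => (extendPR p.1 e o₀, p.2)
    | none => (extendPR p.1 e (pickMin f U e p.2), extendPR p.2 e (pickMin f U e p.2))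

/-- The adversarial simulation of `πs` on top of `ψ`. -/
noncomputable def advRun [Finite O] [Nonempty O] (f : (ι → Option O) → ℝ)
    (U : Set (ι → O)) (πs : (ι → Option O) → Option ι) (ψ : ι → Option O) :
    ℕ → (ι → Option O) × (ι → Option O)
  | 0 => (emptyPR, ψ)
  | n + 1 => advStep f U πs (advRun f U πs ψ n)

section AdvStep

variable [Finite O] [Nonempty O] {f : (ι → Option O) → ℝ} {U : Set (ι → O)}
  {πs : (ι → Option O) → Option ι} {p : (ι → Option O) × (ι → Option O)} {e : ι} {o₀ : O}

lemma advStep_none (h : πs p.1 = none) : advStep f U πs p = p := by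
  simp [advStep, h]

lemma advStep_some_some (h : πs p.1 = some e) (ho : p.2 e = some o₀) :
    advStep f U πs p = (extendPR p.1 e o₀, p.2) := by
  simp [advStep, h, ho]

lemma advStep_some_none (h : πs p.1 = some e) (ho : p.2 e = none) :
    advStep f U πs p = (extendPR p.1 e (pickMin f U e p.2),
      extendPR p.2 e (pickMin f U e p.2)) := by
  simp [advStep, h, ho]

end AdvStep

/-- The key density lemma: the greedy item's worst-case marginal density is at
least `(f* − f(ψ))/B`. -/
lemma keyDensity [Fintype ι] [Finite O] [Nonempty O]
    (f : (ι → Option O) → ℝ) (U : Set (ι → O))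
    (hmono : WCMonotone f U) (hsub : WCSubmodular f U)
    (c : ι → ℝ) (hc : ∀ e, 0 < c e)
    (πs : (ι → Option O) → Option ι) (hπs : ValidPolicy πs)
    (B : ℝ) (hB : 0 < B)
    (ψ : ι → Option O) (hcons : ∃ φ ∈ U, consistent φ ψ)
    (eg : ι) (heg : ψ eg = none)
    (hmax : ∀ e', e' ∉ dom ψ → Dwc f U e' ψ / c e' ≤ Dwc f U eg ψ / c eg)
    (fstar : ℝ)
    (hfstar : ∀ φ ∈ U, fstar ≤ f (finalPR πs φ))
    (hcost : ∀ φ ∈ U, costPR c (finalPR πs φ) ≤ B) :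
    c eg * (fstar - f ψ) / B ≤ Dwc f U eg ψ := by
  classical
  set ρ := Dwc f U eg ψ / c eg with hρdef
  have hρ0 : 0 ≤ ρ :=
    div_nonneg (hmono ψ hcons eg (not_dom_iff.mpr heg)) (hc eg).le
  set A := advRun f U πs ψ with hAdef
  -- basic structural invariants
  have hinv : ∀ n : ℕ, subreal (A n).1 (A n).2 ∧ subreal ψ (A n).2 ∧
      (∃ φ ∈ U, consistent φ (A n).2) ∧
      f (A n).2 ≤ f ψ + ρ * costPR c (A n).1 := by
    intro n
    induction n with
    | zero =>
      refine ⟨?_, subreal_refl ψ, hcons, ?_⟩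
      · intro x o hx; simp [hAdef, advRun, emptyPR] at hx
      · simp [hAdef, advRun, costPR_empty]
    | succ n ih =>
      obtain ⟨hχμ, hψμ, hconsμ, hfμ⟩ := ih
      have hAn1 : A (n + 1) = advStep f U πs (A n) := rfl
      cases hstep : πs (A n).1 with
      | none =>
        rw [hAn1, advStep_none hstep]
        exact ⟨hχμ, hψμ, hconsμ, hfμ⟩
      | some e =>
        have hχe : (A n).1 e = none := hπs _ _ hstep
        cases hμe : (A n).2 e with
        | some o₀ =>
          rw [hAn1, advStep_some_some hstep hμe]
          refine ⟨?_, hψμ, hconsμ, ?_⟩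
          · intro x o' hx
            by_cases hxe : x = e
            · subst hxe
              simp [extendPR] at hx
              rw [← hx]; exact hμe
            · simp [extendPR, hxe] at hx
              exact hχμ x o' hx
          · have : costPR c (extendPR (A n).1 e o₀) = costPR c (A n).1 + c e :=
              costPR_extend c hχe o₀
            rw [this]
            have : 0 ≤ ρ * c e := mul_nonneg hρ0 (hc e).le
            calc f (A n).2 ≤ f ψ + ρ * costPR c (A n).1 := hfμ
              _ ≤ f ψ + ρ * (costPR c (A n).1 + c e) := by nlinarith
        | none =>
          set o := pickMin f U e (A n).2 with hodef
          have hOne : (Ostates U e (A n).2).Nonempty := by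
            obtain ⟨φ₁, hφ₁U, hφ₁⟩ := hconsμ
            exact ⟨φ₁ e, φ₁, hφ₁U, hφ₁, rfl⟩
          obtain ⟨hoin, homin⟩ := pickMin_spec (f := f) hOne
          obtain ⟨φ₂, hφ₂U, hφ₂μ, hφ₂e⟩ := hoin
          rw [hAn1, advStep_some_none hstep hμe]
          have hψe : ψ e = none := by
            cases hψe : ψ e with
            | none => rfl
            | some o' =>
              have := hψμ e o' hψe
              rw [hμe] at this
              exact absurd this (by simp)
          refine ⟨?_, subreal_trans hψμ (subreal_extend hμe o), ?_, ?_⟩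
          · intro x o' hx
            by_cases hxe : x = e
            · subst hxe
              simp [extendPR] at hx ⊢
              exact hx
            · simp [extendPR, hxe] at hx ⊢
              exact hχμ x o' hx
          · exact ⟨φ₂, hφ₂U, consistent_extend hφ₂μ hφ₂e⟩
          · -- the marginal of the adversarially chosen state is at most ρ * c e
            have hmarg : f (extendPR (A n).2 e o) - f (A n).2 ≤ Dwc f U e (A n).2 := by
              apply le_csInf (hOne.image _)
              rintro b ⟨o', ho', rfl⟩
              exact sub_le_sub_right (homin o' ho') _
            have hsubm : Dwc f U e (A n).2 ≤ Dwc f U e ψ :=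
              hsub ψ (A n).2 hψμ hconsμ e (not_dom_iff.mpr hμe)
            have hgr : Dwc f U e ψ ≤ ρ * c e := by
              have := hmax e (not_dom_iff.mpr hψe)
              exact (div_le_iff₀ (hc e)).mp this
            rw [costPR_extend c hχe o]
            calc f (extendPR (A n).2 e o)
                ≤ f (A n).2 + ρ * c e := by linarith
              _ ≤ f ψ + ρ * costPR c (A n).1 + ρ * c e := by linarith
              _ = f ψ + ρ * (costPR c (A n).1 + c e) := by ring
  -- the second component only grows
  have hμchain : ∀ n m : ℕ, n ≤ m → subreal (A n).2 (A m).2 := by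
    have hstep1 : ∀ n : ℕ, subreal (A n).2 (A (n + 1)).2 := by
      intro n
      have hAn1 : A (n + 1) = advStep f U πs (A n) := rfl
      cases hstep : πs (A n).1 with
      | none => rw [hAn1, advStep_none hstep]; exact subreal_refl _
      | some e =>
        cases hμe : (A n).2 e with
        | some o₀ => rw [hAn1, advStep_some_some hstep hμe]; exact subreal_refl _
        | none => rw [hAn1, advStep_some_none hstep hμe]; exact subreal_extend hμe _
    intro n m hnm
    induction m, hnm using Nat.le_induction with
    | base => exact subreal_refl _
    | succ m hm ih => exact subreal_trans ih (hstep1 m)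
  set N := Fintype.card ι with hNdef
  obtain ⟨φa, hφaU, hφaμ⟩ := (hinv N).2.2.1
  -- replay: running πs under φa reproduces the first components
  have hreplay : ∀ n : ℕ, n ≤ N → runPolicy πs φa n = (A n).1 := by
    intro n
    induction n with
    | zero => intro _; rfl
    | succ n ihn =>
      intro hn1
      have hn : n ≤ N := Nat.le_of_succ_le hn1
      have hAn1 : A (n + 1) = advStep f U πs (A n) := rfl
      have hrun : runPolicy πs φa (n + 1) = stepPolicy πs φa ((A n).1) := by
        show stepPolicy πs φa (runPolicy πs φa n) = _
        rw [ihn hn]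
      cases hstep : πs (A n).1 with
      | none =>
        rw [hrun]
        unfold stepPolicy
        rw [hstep, hAn1, advStep_none hstep]
      | some e =>
        have hχ1 : (A (n + 1)).1 e ≠ none := by
          cases hμe : (A n).2 e with
          | some o₀ => rw [hAn1, advStep_some_some hstep hμe]; simp [extendPR]
          | none => rw [hAn1, advStep_some_none hstep hμe]; simp [extendPR]
        obtain ⟨o, ho⟩ := Option.ne_none_iff_exists'.mp hχ1
        have hμN : (A N).2 e = some o :=
          hμchain (n+1) N hn1 e o ((hinv (n+1)).1 e o ho)
        have hφae : φa e = o := hφaμ e o hμN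
        have hrun' : stepPolicy πs φa ((A n).1) = extendPR (A n).1 e (φa e) := by
          unfold stepPolicy; rw [hstep]
        rw [hrun, hrun', hφae]
        cases hμe : (A n).2 e with
        | some o₀ =>
          rw [hAn1, advStep_some_some hstep hμe]
          rw [hAn1, advStep_some_some hstep hμe] at ho
          have : o₀ = o := by simpa [extendPR] using ho
          rw [this]
        | none =>
          rw [hAn1, advStep_some_none hstep hμe]
          rw [hAn1, advStep_some_none hstep hμe] at ho
          have : pickMin f U e (A n).2 = o := by simpa [extendPR] using ho
          rw [this]
  have hfinal : finalPR πs φa = (A N).1 := hreplay N le_rfl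
  -- put it together
  have h1 : fstar ≤ f ((A N).1) := hfinal ▸ hfstar φa hφaU
  have h2 : f ((A N).1) ≤ f ((A N).2) := by
    classical
    exact mono_pointwise hmono _ ((A N).1) ((A N).2) (hinv N).1
      ⟨φa, hφaU, hφaμ⟩ rfl
  have h3 : costPR c ((A N).1) ≤ B := hfinal ▸ hcost φa hφaU
  have h4 : f ((A N).2) ≤ f ψ + ρ * B := by
    have := (hinv N).2.2.2
    nlinarith
  have h5 : fstar - f ψ ≤ ρ * B := by linarith
  have h6 : Dwc f U eg ψ = ρ * c eg := (div_mul_cancel₀ _ (hc eg).ne').symm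
  rw [h6, div_le_iff₀ hB]
  nlinarith [mul_le_mul_of_nonneg_left h5 (hc eg).le]

end Aux

/-- **Corollary 1.** Suppose `f` is worst-case monotone and worst-case
submodular with `f ∅ = 0`, and let `B` be a positive integer budget. Then the
relaxed budgeted worst-case density-greedy policy `π^{g+}` satisfies
`f_wc(π^{g+}) ≥ (1 − 1/e) · f_wc(π*)` for every adaptive policy `π*` with
`c_wc(π*) ≤ B`. -/
theorem stmt_12 {ι O : Type*} [Fintype ι] [Nonempty ι] [DecidableEq ι] [Fintype O]
    (U : Set (ι → O)) (hU : U.Nonempty)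
    (c : ι → ℕ) (hc : ∀ e, 0 < c e)
    (f : (ι → Option O) → ℝ) (hf0 : ∀ ψ, 0 ≤ f ψ)
    (hmono : WCMonotone f U) (hsub : WCSubmodular f U)
    (hempty : f emptyPR = 0)
    (B : ℕ) (hB : 0 < B)
    (πgp : (ι → Option O) → Option ι)
    (hgp : RelaxedBudgetGreedy f U (fun e => (c e : ℝ)) (B : ℝ) πgp)
    (πs : (ι → Option O) → Option ι) (hπs : ValidPolicy πs)
    (hπsB : cwc (fun e => (c e : ℝ)) U πs ≤ (B : ℝ)) :
    (1 - (Real.exp 1)⁻¹) * fwc f U πs ≤ fwc f U πgp := by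
  classical
  obtain ⟨φ₀, hφ₀U⟩ := hU
  haveI : Nonempty O := ⟨φ₀ (Classical.arbitrary ι)⟩
  set c' : ι → ℝ := fun e => (c e : ℝ) with hc'def
  have hc' : ∀ e, 0 < c' e := fun e => by
    show (0 : ℝ) < (c e : ℝ)
    exact_mod_cast hc e
  have hB' : (0 : ℝ) < (B : ℝ) := by exact_mod_cast hB
  set fstar := fwc f U πs with hfstardef
  have hfstareq : fstar = sInf ((fun φ => f (finalPR πs φ)) '' U) := rfl
  have hbdd : BddBelow ((fun φ => f (finalPR πs φ)) '' U) := by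
    refine ⟨0, ?_⟩
    rintro _ ⟨φ, hφ, rfl⟩
    exact hf0 _
  have hfstar_le : ∀ φ ∈ U, fstar ≤ f (finalPR πs φ) := by
    intro φ hφ
    rw [hfstareq]
    exact csInf_le hbdd ⟨φ, hφ, rfl⟩
  have hfstar0 : 0 ≤ fstar := by
    rw [hfstareq]
    refine le_csInf ⟨_, ⟨φ₀, hφ₀U, rfl⟩⟩ ?_
    rintro _ ⟨φ, hφ, rfl⟩
    exact hf0 _
  have hcwceq : cwc c' U πs = sSup ((fun φ => costPR c' (finalPR πs φ)) '' U) := rfl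
  have hbddA : BddAbove ((fun φ => costPR c' (finalPR πs φ)) '' U) := by
    refine ⟨∑ e : ι, c' e, ?_⟩
    rintro _ ⟨φ', hφ', rfl⟩
    exact costPR_le_sum (fun e => (hc' e).le) _
  have hcostB : ∀ φ ∈ U, costPR c' (finalPR πs φ) ≤ (B : ℝ) := by
    intro φ hφ
    refine le_trans (le_csSup hbddA ⟨φ, hφ, rfl⟩) ?_
    rw [← hcwceq]
    exact hπsB
  obtain ⟨valid_g, hstop_g, hpick_g⟩ := hgp
  have hexp1 : (0:ℝ) < (Real.exp 1)⁻¹ := inv_pos.mpr (Real.exp_pos 1)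
  -- the per-realization bound
  have key : ∀ φ ∈ U, (1 - (Real.exp 1)⁻¹) * fstar ≤ f (finalPR πgp φ) := by
    intro φ hφ
    -- the exponential decay invariant along the greedy run
    have Q : ∀ n : ℕ, fstar - f (runPolicy πgp φ n) ≤
        fstar * Real.exp (-(costPR c' (runPolicy πgp φ n)) / (B : ℝ)) := by
      intro n
      induction n with
      | zero =>
        show fstar - f (emptyPR) ≤ fstar * Real.exp (-(costPR c' (emptyPR : ι → Option O)) / _)
        rw [hempty, costPR_empty]
        simp
      | succ n ih =>
        set ψn := runPolicy πgp φ n with hψndef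
        have hreach : Reachable πgp U ψn := ⟨φ, hφ, n, rfl⟩
        have hconsn : consistent φ ψn := consistent_run φ n
        have hrun1 : runPolicy πgp φ (n + 1) = stepPolicy πgp φ ψn := rfl
        cases hstep : πgp ψn with
        | none =>
          rw [hrun1]
          unfold stepPolicy
          rw [hstep]
          exact ih
        | some e =>
          have hψne : ψn e = none := valid_g _ _ hstep
          have hcostle : costPR c' ψn ≤ (B : ℝ) := by
            by_contra hgt
            push_neg at hgt
            rw [hstop_g ψn hreach hgt] at hstep
            exact absurd hstep (by simp)
          have hdomne : dom ψn ≠ Set.univ := by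
            intro hdu
            exact (not_dom_iff.mpr hψne) (hdu ▸ Set.mem_univ e)
          obtain ⟨eg, hegdom, hegsome, hegmax⟩ := hpick_g ψn hreach hcostle hdomne
          have hee : eg = e := by
            rw [hstep] at hegsome
            exact (Option.some_inj.mp hegsome).symm
          subst hee
          have hkey : c' eg * (fstar - f ψn) / (B : ℝ) ≤ Dwc f U eg ψn :=
            keyDensity f U hmono hsub c' hc' πs hπs (B : ℝ) hB' ψn
              ⟨φ, hφ, hconsn⟩ eg (not_dom_iff.mp hegdom) hegmax fstar hfstar_le hcostB
          have hD0 : 0 ≤ Dwc f U eg ψn := hmono ψn ⟨φ, hφ, hconsn⟩ eg hegdom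
          have hmarg : Dwc f U eg ψn ≤ f (extendPR ψn eg (φ eg)) - f ψn :=
            dwc_le_marg f hφ hconsn eg
          have hrun1' : runPolicy πgp φ (n + 1) = extendPR ψn eg (φ eg) := by
            rw [hrun1]
            unfold stepPolicy
            rw [hstep]
          have hcost1 : costPR c' (extendPR ψn eg (φ eg)) = costPR c' ψn + c' eg :=
            costPR_extend c' (not_dom_iff.mp hegdom) _
          rw [hrun1', hcost1]
          set g := fstar - f ψn with hgdef
          set x := c' eg / (B : ℝ) with hxdef
          have hx0 : 0 < x := div_pos (hc' eg) hB'
          have hstep1 : fstar - f (extendPR ψn eg (φ eg)) ≤ g - x * g := by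
            have : x * g ≤ Dwc f U eg ψn := by
              rw [hxdef]
              calc c' eg / (B : ℝ) * g = c' eg * g / (B : ℝ) := by ring
                _ ≤ Dwc f U eg ψn := hkey
            linarith
          have hstep2 : fstar - f (extendPR ψn eg (φ eg)) ≤ g := by linarith
          have hRHS0 : 0 ≤ fstar * Real.exp (-(costPR c' ψn + c' eg) / (B : ℝ)) :=
            mul_nonneg hfstar0 (Real.exp_pos _).le
          by_cases hg : g ≤ 0
          · linarith
          · push_neg at hg
            by_cases hx1 : x ≤ 1
            · have h1x : 1 - x ≤ Real.exp (-x) := by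
                have := Real.add_one_le_exp (-x)
                linarith
              have hexpeq : Real.exp (-x) * Real.exp (-(costPR c' ψn) / (B : ℝ)) =
                  Real.exp (-(costPR c' ψn + c' eg) / (B : ℝ)) := by
                rw [← Real.exp_add]
                congr 1
                rw [hxdef]
                field_simp
                ring
              calc fstar - f (extendPR ψn eg (φ eg)) ≤ g - x * g := hstep1
                _ = (1 - x) * g := by ring
                _ ≤ Real.exp (-x) * g := mul_le_mul_of_nonneg_right h1x hg.le
                _ ≤ Real.exp (-x) * (fstar * Real.exp (-(costPR c' ψn) / (B : ℝ))) :=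
                    mul_le_mul_of_nonneg_left ih (Real.exp_pos _).le
                _ = fstar * Real.exp (-(costPR c' ψn + c' eg) / (B : ℝ)) := by
                    rw [← hexpeq]; ring
            · push_neg at hx1
              have : g - x * g ≤ 0 := by nlinarith
              linarith
    -- finishing: case on whether the greedy exhausted the ground set
    set N := Fintype.card ι with hNdef
    set ψN := runPolicy πgp φ N with hψNdef
    have hfinal : finalPR πgp φ = ψN := rfl
    have hnone : πgp ψN = none := run_stop valid_g φ
    have hconsN : consistent φ ψN := consistent_run φ N
    by_cases hdom : dom ψN = Set.univ
    · -- greedy observed everything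
      have hsubN : subreal (finalPR πs φ) ψN := by
        intro x o hx
        have hφx : φ x = o := consistent_run φ N (π := πs) x o hx
        have hxdom : x ∈ dom ψN := hdom ▸ Set.mem_univ x
        have hxne : ψN x ≠ none := hxdom
        obtain ⟨o', ho'⟩ := Option.ne_none_iff_exists'.mp hxne
        have : φ x = o' := hconsN x o' ho'
        rw [ho', ← hφx, this]
      have h2 : f (finalPR πs φ) ≤ f ψN :=
        mono_pointwise hmono _ _ _ hsubN ⟨φ, hφ, hconsN⟩ rfl
      have h1 : fstar ≤ f (finalPR πs φ) := hfstar_le φ hφ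
      rw [hfinal]
      nlinarith
    · -- greedy exceeded the budget
      have hreachN : Reachable πgp U ψN := ⟨φ, hφ, N, rfl⟩
      have hcostN : (B : ℝ) < costPR c' ψN := by
        by_contra hle
        push_neg at hle
        obtain ⟨eg, _, hegsome, _⟩ := hpick_g ψN hreachN hle hdom
        rw [hnone] at hegsome
        exact absurd hegsome (by simp)
      have hQN := Q N
      have hexple : Real.exp (-(costPR c' ψN) / (B : ℝ)) ≤ (Real.exp 1)⁻¹ := by
        rw [← Real.exp_neg]
        apply Real.exp_le_exp.mpr
        rw [div_le_iff₀ hB'] at *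
        nlinarith
      have : fstar - f ψN ≤ fstar * (Real.exp 1)⁻¹ := by
        calc fstar - f ψN ≤ fstar * Real.exp (-(costPR c' ψN) / (B : ℝ)) := hQN
          _ ≤ fstar * (Real.exp 1)⁻¹ := mul_le_mul_of_nonneg_left hexple hfstar0
      rw [hfinal]
      nlinarith
  -- conclude about the infimum
  have : fwc f U πgp = sInf ((fun φ => f (finalPR πgp φ)) '' U) := rfl
  rw [this]
  refine le_csInf ⟨_, ⟨φ₀, hφ₀U, rfl⟩⟩ ?_
  rintro _ ⟨φ, hφ, rfl⟩
  exact key φ hφ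

end WCAS
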